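/- Upper bound for Bowen entropy of a product of two different systems: let (X_1,d_1,T_1) and (X_2,d_2,T_2) be topological dynamical systems. For any Z_1 ⊆ X_1 and Z_2 ⊆ X_2, h^B(Z_1 × Z_2) ≤ h^B(Z_1) + h^P(Z_2), where the product is taken in the system (X_1×X_2, ρ, T_1×T_2). -/

import Mathlib

open Filter Set
open scoped ENNReal NNReal

namespace BowenProduct

variable {X : Type*} [PseudoMetricSpace X]

/-- The open Bowen ball of order `n` and radius `ε` around `x`:
the ball for the `n`-th Bowen metric `d_n(x,y) = max_{0 ≤ k ≤ n-1} d(T^k x, T^k y)`. -/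
def bowenBall (T : X → X) (n : ℕ) (x : X) (ε : ℝ) : Set X :=
  {y | ∀ k < n, dist (T^[k] x) (T^[k] y) < ε}

/-- The closed Bowen ball of order `n` and radius `ε` around `x`. -/
def bowenClosedBall (T : X → X) (n : ℕ) (x : X) (ε : ℝ) : Set X :=
  {y | ∀ k < n, dist (T^[k] x) (T^[k] y) ≤ ε}

/-- `M^s_{N,ε}(Z)`: the infimum of `Σ_i exp(-s n_i)` over all finite or countable families
`{B_{n_i}(x_i, ε)}` with `x_i ∈ X`, `n_i ≥ N`, covering `Z`. -/
noncomputable def coverSum (T : X → X) (s : ℝ) (N : ℕ) (ε : ℝ) (Z : Set X) : ℝ≥0∞ :=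
  ⨅ (F : Set (X × ℕ)) (_ : F.Countable) (_ : ∀ p ∈ F, N ≤ p.2)
    (_ : Z ⊆ ⋃ p ∈ F, bowenBall T p.2 p.1 ε),
    ∑' p : F, ENNReal.ofReal (Real.exp (-s * ((p : X × ℕ).2 : ℝ)))

/-- `M^s_ε(Z) = lim_{N → ∞} M^s_{N,ε}(Z)`; the limit exists and equals the supremum
since `M^s_{N,ε}(Z)` does not decrease as `N` increases. -/
noncomputable def coverMeasureEps (T : X → X) (s ε : ℝ) (Z : Set X) : ℝ≥0∞ :=
  ⨆ N : ℕ, coverSum T s N ε Z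

/-- `M^s(Z) = lim_{ε → 0} M^s_ε(Z)`; the limit exists and equals the supremum
since `M^s_ε(Z)` does not decrease as `ε` decreases. -/
noncomputable def coverMeasure (T : X → X) (s : ℝ) (Z : Set X) : ℝ≥0∞ :=
  ⨆ (ε : ℝ) (_ : 0 < ε), coverMeasureEps T s ε Z

/-- Bowen's topological entropy `h^B(Z)`: the critical value of `s ≥ 0` at which
`M^s(Z)` jumps from `∞` to `0`, i.e. `inf {s ≥ 0 : M^s(Z) = 0}` (and `∞` if no such `s`). -/
noncomputable def bowenEntropy (T : X → X) (Z : Set X) : ℝ≥0∞ :=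
  ⨅ (s : ℝ≥0) (_ : coverMeasure T (s : ℝ) Z = 0), (s : ℝ≥0∞)

/-- `P^s_{N,ε}(Z)`: the supremum of `Σ_i exp(-s n_i)` over all finite or countable pairwise
disjoint families `{B̄_{n_i}(x_i, ε)}` with `x_i ∈ Z`, `n_i ≥ N`. -/
noncomputable def packingSum (T : X → X) (s : ℝ) (N : ℕ) (ε : ℝ) (Z : Set X) : ℝ≥0∞ :=
  ⨆ (F : Set (X × ℕ)) (_ : F.Countable) (_ : ∀ p ∈ F, p.1 ∈ Z ∧ N ≤ p.2)
    (_ : F.PairwiseDisjoint fun p => bowenClosedBall T p.2 p.1 ε),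
    ∑' p : F, ENNReal.ofReal (Real.exp (-s * ((p : X × ℕ).2 : ℝ)))

/-- `P^s_ε(Z) = lim_{N → ∞} P^s_{N,ε}(Z)`; the limit exists and equals the infimum
since `P^s_{N,ε}(Z)` does not increase as `N` increases. -/
noncomputable def packingPre (T : X → X) (s ε : ℝ) (Z : Set X) : ℝ≥0∞ :=
  ⨅ N : ℕ, packingSum T s N ε Z

/-- `𝒫^s_ε(Z) = inf { Σ_{i=1}^∞ P^s_ε(Z_i) : ∪_{i=1}^∞ Z_i ⊇ Z }`. -/
noncomputable def packingMeasureEps (T : X → X) (s ε : ℝ) (Z : Set X) : ℝ≥0∞ :=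
  ⨅ (Zs : ℕ → Set X) (_ : Z ⊆ ⋃ i, Zs i), ∑' i, packingPre T s ε (Zs i)

/-- `h^P(Z, ε)`: the critical value of `s ≥ 0` at which `𝒫^s_ε(Z)` jumps from `∞` to `0`. -/
noncomputable def packingEntropyEps (T : X → X) (ε : ℝ) (Z : Set X) : ℝ≥0∞ :=
  ⨅ (s : ℝ≥0) (_ : packingMeasureEps T (s : ℝ) ε Z = 0), (s : ℝ≥0∞)

/-- The packing topological entropy `h^P(Z) = lim_{ε → 0} h^P(Z, ε)`; the limit exists and
equals the supremum since `h^P(Z,ε)` increases as `ε` decreases. -/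
noncomputable def packingEntropy (T : X → X) (Z : Set X) : ℝ≥0∞ :=
  ⨆ (ε : ℝ) (_ : 0 < ε), packingEntropyEps T ε Z

/-- `r_n(Z, ε)`: the largest cardinality of an `(n,ε)`-separated subset `E ⊆ Z`, i.e. a set in
which distinct points are at Bowen `d_n`-distance `> ε`. -/
noncomputable def maxSep (T : X → X) (Z : Set X) (n : ℕ) (ε : ℝ) : ℕ :=
  sSup {k : ℕ | ∃ E : Finset X, ↑E ⊆ Z ∧
    (∀ x ∈ E, ∀ y ∈ E, x ≠ y → ∃ i < n, ε < dist (T^[i] x) (T^[i] y)) ∧ E.card = k}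

/-- The upper capacity topological entropy
`h^U(Z) = lim_{ε → 0} limsup_{n → ∞} (1/n) log r_n(Z, ε)`; the limit over `ε` equals the
supremum by monotonicity. -/
noncomputable def upperCapacityEntropy (T : X → X) (Z : Set X) : ℝ≥0∞ :=
  ⨆ (ε : ℝ) (_ : 0 < ε),
    Filter.atTop.limsup fun n : ℕ => ENNReal.ofReal (Real.log (maxSep T Z n ε) / n)

end BowenProduct

namespace BowenProduct

variable {X : Type*} [PseudoMetricSpace X]

lemma aux_exp_mono {s s' : ℝ} (h : s ≤ s') (n : ℕ) :
    ENNReal.ofReal (Real.exp (-s' * n)) ≤ ENNReal.ofReal (Real.exp (-s * n)) := by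
  apply ENNReal.ofReal_le_ofReal
  apply Real.exp_le_exp.2
  have hn : (0:ℝ) ≤ n := Nat.cast_nonneg n
  nlinarith

lemma exists_sep_cover (T : X → X) {t : ℝ} {N n : ℕ} {ε : ℝ} (hε : 0 < ε) {Y : Set X}
    (hP : packingSum T t N ε Y < 1) (hn : N ≤ n) :
    ∃ E : Finset X, ↑E ⊆ Y ∧ (E.card : ℝ≥0∞) * ENNReal.ofReal (Real.exp (-t * n)) ≤ 1 ∧
      Y ⊆ ⋃ y ∈ E, bowenBall T n y (3 * ε) := by
  classical
  set c := ENNReal.ofReal (Real.exp (-t * n)) with hc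
  have hc0 : 0 < c := ENNReal.ofReal_pos.2 (Real.exp_pos _)
  set P : Finset X → Prop := fun E => ↑E ⊆ Y ∧ (↑E : Set X).Pairwise
      (fun y y' => Disjoint (bowenClosedBall T n y ε) (bowenClosedBall T n y' ε)) with hPdef
  have key : ∀ E : Finset X, P E → (E.card : ℝ≥0∞) * c ≤ packingSum T t N ε Y := by
    intro E hE
    have hinj : Function.Injective (fun y : X => (y, n)) := by
      intro a b hab; simpa using congrArg Prod.fst hab
    set F : Finset (X × ℕ) := E.image (fun y => (y, n)) with hF
    have hsum : ∑' p : (↑F : Set (X × ℕ)),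
        ENNReal.ofReal (Real.exp (-t * ((p : X × ℕ).2 : ℝ))) = (E.card : ℝ≥0∞) * c := by
      rw [Finset.tsum_subtype' F
        (fun q : X × ℕ => ENNReal.ofReal (Real.exp (-t * (q.2 : ℝ))))]
      rw [hF, Finset.sum_image (fun a _ b _ h => hinj h)]
      simp [hc, Finset.sum_const, nsmul_eq_mul]
    rw [← hsum]
    apply le_iSup_of_le (↑F : Set (X × ℕ))
    apply le_iSup_of_le F.countable_toSet
    have hcond : ∀ p ∈ (↑F : Set (X × ℕ)), p.1 ∈ Y ∧ N ≤ p.2 := by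
      intro p hp
      simp only [hF, Finset.coe_image, Set.mem_image, Finset.mem_coe] at hp
      obtain ⟨y, hy, rfl⟩ := hp
      exact ⟨hE.1 hy, hn⟩
    apply le_iSup_of_le hcond
    have hdisj : (↑F : Set (X × ℕ)).PairwiseDisjoint
        (fun p => bowenClosedBall T p.2 p.1 ε) := by
      intro p hp q hq hpq
      simp only [hF, Finset.coe_image, Set.mem_image, Finset.mem_coe] at hp hq
      obtain ⟨y, hy, rfl⟩ := hp
      obtain ⟨y', hy', rfl⟩ := hq
      have : y ≠ y' := fun h => hpq (by rw [h])
      exact hE.2 hy hy' this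
    exact le_iSup_of_le hdisj le_rfl
  set S : Set ℕ := {k | ∃ E : Finset X, P E ∧ E.card = k} with hS
  have hS0 : 0 ∈ S := ⟨∅, ⟨by simp, by simp⟩, rfl⟩
  have hSbdd : BddAbove S := by
    refine ⟨Nat.floor (c⁻¹.toReal), fun k hk => ?_⟩
    obtain ⟨E, hE, rfl⟩ := hk
    have h1 : (E.card : ℝ≥0∞) * c < 1 := (key E hE).trans_lt hP
    have h2 : (E.card : ℝ≥0∞) ≤ c⁻¹ := ENNReal.le_inv_iff_mul_le.2 h1.le
    have h3 := ENNReal.toReal_mono (ENNReal.inv_ne_top.2 hc0.ne') h2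
    simp only [ENNReal.toReal_natCast] at h3
    exact Nat.le_floor h3
  obtain ⟨E, hE, hcard⟩ : ∃ E : Finset X, P E ∧ E.card = sSup S :=
    Nat.sSup_mem ⟨0, hS0⟩ hSbdd
  refine ⟨E, hE.1, (key E hE).trans hP.le, ?_⟩
  intro z hz
  by_cases hex : ∃ y ∈ E, ¬ Disjoint (bowenClosedBall T n y ε) (bowenClosedBall T n z ε)
  · obtain ⟨y, hy, hnd⟩ := hex
    obtain ⟨w, hw1, hw2⟩ := Set.not_disjoint_iff.1 hnd
    refine Set.mem_biUnion hy ?_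
    intro k hk
    calc dist (T^[k] y) (T^[k] z)
        ≤ dist (T^[k] y) (T^[k] w) + dist (T^[k] w) (T^[k] z) := dist_triangle _ _ _
      _ ≤ ε + ε := add_le_add (hw1 k hk) (by rw [dist_comm]; exact hw2 k hk)
      _ < 3 * ε := by linarith
  · push_neg at hex
    exfalso
    have hself : ∀ y : X, z ∈ bowenClosedBall T n y ε → False ∨ True := fun _ _ => Or.inr trivial
    have hzE : z ∉ E := by
      intro hzE
      have hd := hex z hzE
      have : z ∈ bowenClosedBall T n z ε := fun k _ => by simp [hε.le]
      exact (Set.disjoint_left.1 hd this) this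
    have hP' : P (insert z E) := by
      constructor
      · rw [Finset.coe_insert]
        exact Set.insert_subset hz hE.1
      · rw [Finset.coe_insert]
        rw [Set.pairwise_insert]
        refine ⟨hE.2, fun y hy _ => ⟨(hex y hy).symm, hex y hy⟩⟩
    have hmem : (insert z E).card ∈ S := ⟨_, hP', rfl⟩
    have hle := le_csSup hSbdd hmem
    rw [Finset.card_insert_of_notMem hzE, hcard] at hle
    omega

lemma coverMeasure_anti (T : X → X) {s s' : ℝ} (h : s ≤ s') (Z : Set X) :
    coverMeasure T s' Z ≤ coverMeasure T s Z := by
  simp only [coverMeasure, coverMeasureEps, coverSum]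
  refine iSup_mono fun ε => iSup_mono fun _ => iSup_mono fun N => ?_
  refine iInf_mono fun F => iInf_mono fun _ => iInf_mono fun _ => iInf_mono fun _ => ?_
  exact ENNReal.tsum_le_tsum fun p => aux_exp_mono h _

lemma packingMeasureEps_anti (T : X → X) {s s' : ℝ} (h : s ≤ s') (ε : ℝ) (Z : Set X) :
    packingMeasureEps T s' ε Z ≤ packingMeasureEps T s ε Z := by
  simp only [packingMeasureEps, packingPre, packingSum]
  refine iInf_mono fun Zs => iInf_mono fun _ => ENNReal.tsum_le_tsum fun i => ?_
  refine iInf_mono fun M => ?_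
  refine iSup_mono fun F => iSup_mono fun _ => iSup_mono fun _ => iSup_mono fun _ => ?_
  exact ENNReal.tsum_le_tsum fun p => aux_exp_mono h _

lemma tsum_half_pows : ∑' i : ℕ, ((2⁻¹ : ℝ≥0∞)) ^ (i + 1) = 1 := by
  have h1 : ∀ i : ℕ, ((2⁻¹ : ℝ≥0∞)) ^ (i + 1) = 2⁻¹ * 2⁻¹ ^ i := fun i => pow_succ' _ _
  simp only [h1]
  rw [ENNReal.tsum_mul_left, ENNReal.tsum_geometric, ENNReal.one_sub_inv_two, inv_inv]
  exact ENNReal.inv_mul_cancel two_ne_zero ENNReal.ofNat_ne_top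

lemma coverMeasure_prod_eq_zero {X₁ X₂ : Type*} [PseudoMetricSpace X₁] [PseudoMetricSpace X₂]
    (T₁ : X₁ → X₁) (T₂ : X₂ → X₂) {s t : ℝ} {Z₁ : Set X₁} {Z₂ : Set X₂}
    (hcov : ∀ ε : ℝ, 0 < ε → ∀ N : ℕ, coverSum T₁ s N ε Z₁ = 0)
    (hpack : ∀ ε : ℝ, 0 < ε → packingMeasureEps T₂ t ε Z₂ = 0) :
    coverMeasure (Prod.map T₁ T₂) (s + t) (Z₁ ×ˢ Z₂) = 0 := by
  classical
  simp only [coverMeasure, coverMeasureEps, ENNReal.iSup_eq_zero]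
  intro ε hε N
  refine le_antisymm (ENNReal.le_of_forall_pos_le_add fun η hη _ => ?_) (zero_le)
  rw [zero_add]
  set ε3 : ℝ := ε / 3 with hε3def
  have hε3 : 0 < ε3 := by positivity
  have h3ε3 : 3 * ε3 = ε := by rw [hε3def]; ring
  have hp : packingMeasureEps T₂ t ε3 Z₂ < 1 := by
    rw [hpack ε3 hε3]; exact zero_lt_one
  rw [packingMeasureEps, iInf_lt_iff] at hp
  obtain ⟨Zs, hp⟩ := hp
  rw [iInf_lt_iff] at hp
  obtain ⟨hZs, hp⟩ := hp
  have hPrei : ∀ i : ℕ, ∃ M : ℕ, packingSum T₂ t M ε3 (Zs i) < 1 := by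
    intro i
    have h1 : packingPre T₂ t ε3 (Zs i) < 1 := lt_of_le_of_lt (ENNReal.le_tsum i) hp
    rw [packingPre, iInf_lt_iff] at h1
    exact h1
  choose Mi hMi using hPrei
  have hcovi : ∀ i : ℕ, ∃ F : Set (X₁ × ℕ), F.Countable ∧ (∀ p ∈ F, max N (Mi i) ≤ p.2) ∧
      (Z₁ ⊆ ⋃ p ∈ F, bowenBall T₁ p.2 p.1 ε) ∧
      ∑' p : F, ENNReal.ofReal (Real.exp (-s * ((p : X₁ × ℕ).2 : ℝ)))
        ≤ (η : ℝ≥0∞) * 2⁻¹ ^ (i + 1) := by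
    intro i
    have h0 : coverSum T₁ s (max N (Mi i)) ε Z₁ < (η : ℝ≥0∞) * 2⁻¹ ^ (i + 1) := by
      rw [hcov ε hε (max N (Mi i))]
      have h2 : (0:ℝ≥0∞) < (η : ℝ≥0∞) := ENNReal.coe_pos.2 hη
      have h3 : ((2⁻¹ : ℝ≥0∞)) ^ (i + 1) ≠ 0 :=
        pow_ne_zero _ (ENNReal.inv_ne_zero.2 ENNReal.ofNat_ne_top)
      exact ENNReal.mul_pos h2.ne' h3
    rw [coverSum, iInf_lt_iff] at h0
    obtain ⟨F, h0⟩ := h0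
    rw [iInf_lt_iff] at h0; obtain ⟨h1, h0⟩ := h0
    rw [iInf_lt_iff] at h0; obtain ⟨h2, h0⟩ := h0
    rw [iInf_lt_iff] at h0; obtain ⟨h3, h0⟩ := h0
    exact ⟨F, h1, h2, h3, h0.le⟩
  choose F hFc hFN hFcov hFsum using hcovi
  have hsep : ∀ (i : ℕ) (p : F i), ∃ E : Finset X₂, ↑E ⊆ Zs i ∧
      (E.card : ℝ≥0∞) * ENNReal.ofReal (Real.exp (-t * (((p : X₁ × ℕ)).2 : ℝ))) ≤ 1 ∧
      Zs i ⊆ ⋃ y ∈ E, bowenBall T₂ (p : X₁ × ℕ).2 y (3 * ε3) :=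
    fun i p => exists_sep_cover T₂ hε3 (hMi i) ((le_max_right _ _).trans (hFN i p.1 p.2))
  choose E hE1 hE2 hE3 using hsep
  set g : ∀ (i : ℕ), F i → X₂ → (X₁ × X₂) × ℕ :=
    fun i p y => (((p : X₁ × ℕ).1, y), (p : X₁ × ℕ).2) with hg
  set G : Set ((X₁ × X₂) × ℕ) := ⋃ (i : ℕ), ⋃ (p : F i), g i p '' ↑(E i p) with hG
  have hGc : G.Countable := by
    refine Set.countable_iUnion fun i => ?_
    haveI := (hFc i).to_subtype
    exact Set.countable_iUnion fun p => ((E i p).countable_toSet.image _)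
  have hGN : ∀ q ∈ G, N ≤ q.2 := by
    intro q hq
    simp only [hG, Set.mem_iUnion] at hq
    obtain ⟨i, p, hq⟩ := hq
    obtain ⟨y, hy, rfl⟩ := hq
    exact (le_max_left _ _).trans (hFN i p.1 p.2)
  have hGcov : Z₁ ×ˢ Z₂ ⊆ ⋃ q ∈ G, bowenBall (Prod.map T₁ T₂) q.2 q.1 ε := by
    rintro ⟨z₁, z₂⟩ ⟨hz₁, hz₂⟩
    obtain ⟨i, hi⟩ : ∃ i, z₂ ∈ Zs i := by
      have h := hZs hz₂; rwa [Set.mem_iUnion] at h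
    obtain ⟨p, hpF, hzp⟩ : ∃ p ∈ F i, z₁ ∈ bowenBall T₁ p.2 p.1 ε := by
      have h := hFcov i hz₁
      simpa only [Set.mem_iUnion, exists_prop] using h
    obtain ⟨y, hyE, hzy⟩ : ∃ y ∈ E i ⟨p, hpF⟩, z₂ ∈ bowenBall T₂ p.2 y (3 * ε3) := by
      have h := hE3 i ⟨p, hpF⟩ hi
      simpa only [Set.mem_iUnion, exists_prop] using h
    have hqG : g i ⟨p, hpF⟩ y ∈ G := by
      rw [hG]
      exact Set.mem_iUnion.2 ⟨i, Set.mem_iUnion.2 ⟨⟨p, hpF⟩, Set.mem_image_of_mem _ hyE⟩⟩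
    refine Set.mem_biUnion hqG ?_
    intro k hk
    simp only [hg] at hk ⊢
    rw [Prod.map_iterate]
    simp only [Prod.dist_eq, Prod.map_fst, Prod.map_snd, Prod.map_apply]
    apply max_lt
    · exact hzp k hk
    · have h := hzy k hk; rwa [h3ε3] at h
  have hGsum : ∑' q : G, ENNReal.ofReal (Real.exp (-(s + t) * (((q : (X₁ × X₂) × ℕ)).2 : ℝ)))
      ≤ (η : ℝ≥0∞) := by
    set f : (X₁ × X₂) × ℕ → ℝ≥0∞ :=
      fun q => ENNReal.ofReal (Real.exp (-(s + t) * (q.2 : ℝ))) with hf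
    have step : ∀ (i : ℕ) (p : F i), ∑' (q : (g i p '' ↑(E i p) : Set ((X₁ × X₂) × ℕ))), f q
        ≤ ENNReal.ofReal (Real.exp (-s * (((p : X₁ × ℕ)).2 : ℝ))) := by
      intro i p
      have hinj : Function.Injective (g i p) := by
        intro a b hab
        simpa [hg] using congrArg (fun q : (X₁ × X₂) × ℕ => q.1.2) hab
      have himg : ∑' (q : (g i p '' ↑(E i p) : Set ((X₁ × X₂) × ℕ))), f q
          = ((E i p).card : ℝ≥0∞)
            * ENNReal.ofReal (Real.exp (-(s + t) * (((p : X₁ × ℕ)).2 : ℝ))) := by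
        rw [show (g i p '' ↑(E i p) : Set ((X₁ × X₂) × ℕ)) = ↑((E i p).image (g i p)) by
          rw [Finset.coe_image]]
        rw [Finset.tsum_subtype' ((E i p).image (g i p)) f]
        rw [Finset.sum_image (fun a _ b _ h => hinj h)]
        simp [hf, hg, Finset.sum_const, nsmul_eq_mul]
      rw [himg]
      have hsplit : ENNReal.ofReal (Real.exp (-(s + t) * (((p : X₁ × ℕ)).2 : ℝ)))
          = ENNReal.ofReal (Real.exp (-t * (((p : X₁ × ℕ)).2 : ℝ)))
            * ENNReal.ofReal (Real.exp (-s * (((p : X₁ × ℕ)).2 : ℝ))) := by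
        rw [← ENNReal.ofReal_mul (Real.exp_nonneg _), ← Real.exp_add]
        ring_nf
      rw [hsplit, ← mul_assoc]
      calc ((E i p).card : ℝ≥0∞) * ENNReal.ofReal (Real.exp (-t * (((p : X₁ × ℕ)).2 : ℝ)))
            * ENNReal.ofReal (Real.exp (-s * (((p : X₁ × ℕ)).2 : ℝ)))
          ≤ 1 * ENNReal.ofReal (Real.exp (-s * (((p : X₁ × ℕ)).2 : ℝ))) :=
            mul_le_mul_left (hE2 i p) _
        _ = _ := one_mul _
    calc ∑' q : G, f q
        ≤ ∑' (i : ℕ), ∑' (q : (⋃ p : F i, g i p '' ↑(E i p) : Set ((X₁ × X₂) × ℕ))), f q := by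
          haveI : ∀ i, Countable (F i) := fun i => (hFc i).to_subtype
          exact ENNReal.tsum_iUnion_le_tsum f _
      _ ≤ ∑' (i : ℕ), ∑' (p : F i), ∑' (q : (g i p '' ↑(E i p) : Set ((X₁ × X₂) × ℕ))), f q :=
          ENNReal.tsum_le_tsum fun i => ENNReal.tsum_iUnion_le_tsum f _
      _ ≤ ∑' (i : ℕ), ∑' (p : F i), ENNReal.ofReal (Real.exp (-s * (((p : X₁ × ℕ)).2 : ℝ))) :=
          ENNReal.tsum_le_tsum fun i => ENNReal.tsum_le_tsum fun p => step i p
      _ ≤ ∑' (i : ℕ), (η : ℝ≥0∞) * 2⁻¹ ^ (i + 1) := ENNReal.tsum_le_tsum fun i => hFsum i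
      _ = (η : ℝ≥0∞) * ∑' (i : ℕ), (2⁻¹ : ℝ≥0∞) ^ (i + 1) := ENNReal.tsum_mul_left
      _ = (η : ℝ≥0∞) := by rw [tsum_half_pows, mul_one]
  refine le_trans ?_ hGsum
  rw [coverSum]
  exact iInf_le_of_le G (iInf_le_of_le hGc (iInf_le_of_le hGN (iInf_le_of_le hGcov le_rfl)))

end BowenProduct

/-- Upper bound for Bowen entropy of a product of two different systems:
`h^B(Z_1 × Z_2) ≤ h^B(Z_1) + h^P(Z_2)` in the system `(X_1 × X_2, ρ, T_1 × T_2)` with `ρ`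
the max product metric. -/
theorem BowenProduct.bowenEntropy_prod_le_add_packing₂ {X₁ X₂ : Type*}
    [MetricSpace X₁] [CompactSpace X₁] [MetricSpace X₂] [CompactSpace X₂]
    (T₁ : X₁ → X₁) (hT₁ : Continuous T₁) (T₂ : X₂ → X₂) (hT₂ : Continuous T₂)
    (Z₁ : Set X₁) (Z₂ : Set X₂) :
    BowenProduct.bowenEntropy (Prod.map T₁ T₂) (Z₁ ×ˢ Z₂) ≤
      BowenProduct.bowenEntropy T₁ Z₁ + BowenProduct.packingEntropy T₂ Z₂ := by
  classical
  have H : ∀ s' t' : ℝ≥0,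
      BowenProduct.bowenEntropy T₁ Z₁ < (s' : ℝ≥0∞) →
      BowenProduct.packingEntropy T₂ Z₂ < (t' : ℝ≥0∞) →
      BowenProduct.bowenEntropy (Prod.map T₁ T₂) (Z₁ ×ˢ Z₂)
        ≤ (s' : ℝ≥0∞) + (t' : ℝ≥0∞) := by
    intro s' t' hs ht
    have hA : coverMeasure T₁ (s' : ℝ) Z₁ = 0 := by
      rw [bowenEntropy, iInf_lt_iff] at hs
      obtain ⟨u, hs⟩ := hs
      rw [iInf_lt_iff] at hs
      obtain ⟨hu0, hcoe⟩ := hs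
      have hle : (u : ℝ) ≤ (s' : ℝ) := by exact_mod_cast hcoe.le
      exact le_antisymm ((coverMeasure_anti T₁ hle Z₁).trans hu0.le) (zero_le)
    have cov0 : ∀ ε : ℝ, 0 < ε → ∀ N : ℕ, coverSum T₁ (s' : ℝ) N ε Z₁ = 0 := by
      intro ε hε N
      have h := hA
      simp only [coverMeasure, coverMeasureEps, ENNReal.iSup_eq_zero] at h
      exact h ε hε N
    have hB : ∀ ε : ℝ, 0 < ε → packingMeasureEps T₂ (t' : ℝ) ε Z₂ = 0 := by
      intro ε hε
      have h1 : packingEntropyEps T₂ ε Z₂ < (t' : ℝ≥0∞) :=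
        lt_of_le_of_lt
          (le_iSup_of_le ε (le_iSup_of_le hε le_rfl) :
            packingEntropyEps T₂ ε Z₂ ≤ packingEntropy T₂ Z₂) ht
      rw [packingEntropyEps, iInf_lt_iff] at h1
      obtain ⟨v, h1⟩ := h1
      rw [iInf_lt_iff] at h1
      obtain ⟨hv0, hvc⟩ := h1
      have hle : (v : ℝ) ≤ (t' : ℝ) := by exact_mod_cast hvc.le
      exact le_antisymm ((packingMeasureEps_anti T₂ hle ε Z₂).trans hv0.le) (zero_le)
    have hC := coverMeasure_prod_eq_zero T₁ T₂ cov0 hB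
    have hcond : coverMeasure (Prod.map T₁ T₂) ((s' + t' : ℝ≥0) : ℝ) (Z₁ ×ˢ Z₂) = 0 := by
      have hcast : ((s' + t' : ℝ≥0) : ℝ) = (s' : ℝ) + (t' : ℝ) := by push_cast; ring
      rw [hcast]; exact hC
    calc BowenProduct.bowenEntropy (Prod.map T₁ T₂) (Z₁ ×ˢ Z₂)
        ≤ ((s' + t' : ℝ≥0) : ℝ≥0∞) :=
          iInf_le_of_le (s' + t') (iInf_le_of_le hcond le_rfl)
      _ = (s' : ℝ≥0∞) + (t' : ℝ≥0∞) := by push_cast; ring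
  set A := BowenProduct.bowenEntropy T₁ Z₁ with hAdef
  set B := BowenProduct.packingEntropy T₂ Z₂ with hBdef
  rcases eq_or_ne A ⊤ with hA | hA
  · rw [hA, top_add]; exact le_top
  rcases eq_or_ne B ⊤ with hB | hB
  · rw [hB, add_top]; exact le_top
  refine ENNReal.le_of_forall_pos_le_add fun δ hδ _ => ?_
  have hδ2 : (0 : ℝ≥0) < δ / 2 := by positivity
  have hs : A < ((A.toNNReal + δ / 2 : ℝ≥0) : ℝ≥0∞) := by
    rw [ENNReal.coe_add, ENNReal.coe_toNNReal hA]
    exact ENNReal.lt_add_right hA (by exact_mod_cast hδ2.ne')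
  have ht : B < ((B.toNNReal + δ / 2 : ℝ≥0) : ℝ≥0∞) := by
    rw [ENNReal.coe_add, ENNReal.coe_toNNReal hB]
    exact ENNReal.lt_add_right hB (by exact_mod_cast hδ2.ne')
  refine (H _ _ hs ht).trans ?_
  rw [ENNReal.coe_add, ENNReal.coe_add, ENNReal.coe_toNNReal hA, ENNReal.coe_toNNReal hB]
  have hhalf : ((δ / 2 : ℝ≥0) : ℝ≥0∞) + ((δ / 2 : ℝ≥0) : ℝ≥0∞) = ((δ : ℝ≥0) : ℝ≥0∞) := by
    rw [← ENNReal.coe_add]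
    norm_cast
    exact add_halves δ
  calc A + ↑(δ / 2) + (B + ↑(δ / 2)) = A + B + (↑(δ / 2) + ↑(δ / 2)) := by ring
    _ = A + B + ↑δ := by rw [hhalf]
    _ ≤ A + B + ↑δ := le_rfl
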